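/- (Lemma 1, two-distribution version for source and target.) Let X be a separable metric space, and let μₛ (source) and μₜ (target) be Borel probability measures on X whose topological supports satisfy supp(μₜ) ⊆ supp(μₛ). Then for μₜ-almost every target point x̃, and for almost every sequence ω : ℕ → X with respect to the countable product measure μₛ^⊗ℕ (an infinite i.i.d. sample from the source distribution), the nearest-neighbor distance min over i ∈ {0, 1, …, n} of dist(ω(i), x̃) tends to 0 as n → ∞. -/
import Mathlib


open MeasureTheory Metric Filter

/-- (Lemma 1, two-distribution version.) Let `μs` (source) and `μt` (target) be Borel
probability measures on a separable metric space `X` whose topological supports satisfy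
`supp(μt) ⊆ supp(μs)` (the support of a measure being the set of points all of whose open
neighborhoods have positive measure). Let `ν` be the countable product measure `μs^⊗ℕ` on
sequences `ℕ → X` (an infinite i.i.d. sample from the source distribution), characterized
by its values on measurable cylinder sets. Then for `μt`-almost every target point `x₀`
and `ν`-almost every sequence `ω`, the nearest-neighbor distance
`min_{i ≤ n} dist (ω i) x₀` tends to `0` as `n → ∞`. -/
theorem nearest_neighbor_dist_tendsto_zero_two_distributions
    {X : Type*} [MetricSpace X] [TopologicalSpace.SeparableSpace X]
    [MeasurableSpace X] [BorelSpace X]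
    (μs μt : Measure X) [IsProbabilityMeasure μs] [IsProbabilityMeasure μt]
    (hsupp : {x : X | ∀ U : Set X, IsOpen U → x ∈ U → 0 < μt U} ⊆
      {x : X | ∀ U : Set X, IsOpen U → x ∈ U → 0 < μs U})
    (ν : Measure (ℕ → X))
    (hν : ∀ (t : Finset ℕ) (s : ℕ → Set X), (∀ i ∈ t, MeasurableSet (s i)) →
      ν {ω : ℕ → X | ∀ i ∈ t, ω i ∈ s i} = ∏ i ∈ t, μs (s i)) :
    ∀ᵐ x₀ ∂μt, ∀ᵐ ω ∂ν,
      Tendsto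
        (fun n : ℕ =>
          (Finset.range (n + 1)).inf' (by simp) (fun i => dist (ω i) x₀))
        atTop (nhds 0) := by
  haveI : SecondCountableTopology X := UniformSpace.secondCountable_of_separable X
  have hae : ∀ᵐ x₀ ∂μt, x₀ ∈ {x : X | ∀ U : Set X, IsOpen U → x ∈ U → 0 < μt U} := by
    obtain ⟨B, hBc, hB⟩ := TopologicalSpace.exists_countable_basis X
    set N : Set X := ⋃ u ∈ {u ∈ B | μt u = 0}, u with hN
    have hNnull : μt N = 0 := by
      apply (measure_biUnion_null_iff (hBc.mono (Set.sep_subset _ _))).2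
      exact fun u hu => hu.2
    refine measure_mono_null (fun x hx => ?_) hNnull
    have hx' : ¬ ∀ U : Set X, IsOpen U → x ∈ U → 0 < μt U := hx
    push_neg at hx'
    obtain ⟨U, hU, hxU, hμ⟩ := hx'
    obtain ⟨u, huB, hxu, huU⟩ := hB.2.exists_subset_of_mem_open hxU hU
    exact Set.mem_biUnion ⟨huB, measure_mono_null huU (le_antisymm hμ bot_le)⟩ hxu
  filter_upwards [hae] with x₀ hx₀
  have hx₀s := hsupp hx₀
  have key : ∀ k : ℕ, ∀ᵐ ω ∂ν, ∃ i : ℕ, dist (ω i) x₀ < 1 / ((k : ℝ) + 1) := by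
    intro k
    set B : Set X := ball x₀ (1 / ((k : ℝ) + 1)) with hBdef
    have hBpos : 0 < μs B := hx₀s B isOpen_ball (mem_ball_self (by positivity))
    have hcompl : μs Bᶜ < 1 := by
      rw [prob_compl_eq_one_sub measurableSet_ball]
      exact ENNReal.sub_lt_self ENNReal.one_ne_top one_ne_zero hBpos.ne'
    have hbound : ∀ n : ℕ, ν {ω : ℕ → X | ∀ i ∈ Finset.range n, ω i ∈ Bᶜ} = (μs Bᶜ) ^ n := by
      intro n
      rw [hν _ _ (fun i _ => measurableSet_ball.compl)]
      simp [Finset.prod_const, hBdef, one_div]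
    have hnull : ν {ω : ℕ → X | ∀ i : ℕ, ω i ∈ Bᶜ} = 0 := by
      have h1 : ∀ n : ℕ, ν {ω : ℕ → X | ∀ i : ℕ, ω i ∈ Bᶜ} ≤ (μs Bᶜ) ^ n := fun n =>
        (hbound n) ▸ measure_mono (fun ω hω i _ => hω i)
      have h2 : Tendsto (fun n : ℕ => (μs Bᶜ) ^ n) atTop (nhds 0) :=
        ENNReal.tendsto_pow_atTop_nhds_zero_of_lt_one hcompl
      exact le_antisymm (ge_of_tendsto h2 (Eventually.of_forall h1)) bot_le
    rw [ae_iff]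
    refine measure_mono_null (fun ω hω => ?_) hnull
    simp only [Set.mem_setOf_eq, not_exists, not_lt] at hω
    intro i
    simp only [Set.mem_compl_iff, hBdef, mem_ball, not_lt]
    exact hω i
  have key' : ∀ᵐ ω ∂ν, ∀ k : ℕ, ∃ i : ℕ, dist (ω i) x₀ < 1 / ((k : ℝ) + 1) :=
    ae_all_iff.2 key
  filter_upwards [key'] with ω hω
  rw [Metric.tendsto_atTop]
  intro ε hε
  obtain ⟨k, hk⟩ := exists_nat_one_div_lt hε
  obtain ⟨i, hi⟩ := hω k
  refine ⟨i, fun n hn => ?_⟩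
  have h0 : (0 : ℝ) ≤ (Finset.range (n + 1)).inf' (by simp) (fun j => dist (ω j) x₀) :=
    Finset.le_inf' _ _ (fun j _ => dist_nonneg)
  have hle : (Finset.range (n + 1)).inf' (by simp) (fun j => dist (ω j) x₀) ≤ dist (ω i) x₀ :=
    Finset.inf'_le _ (Finset.mem_range.2 (by omega))
  rw [Real.dist_eq, sub_zero, abs_of_nonneg h0]
  exact lt_of_le_of_lt hle (lt_trans hi hk)
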